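/- Let A be a complete normed ring with unit 1, R : ϝ → A Bochner measurable, β : ℝ → ℝ integrable with ‖R(τ)‖ ≤ β(τ) a.e., and for s ≤ t let Q(t,s) = 1 + Σ_{k≥1} i^k ∫_s^t R(t₁)∫_s^{t₁} R(t₂) ⋯ ∫_s^{t_{k−1}} R(t_k) dt_k ⋯ dt₁ be the Dyson series. Then ‖Q(t,s) − 1‖ ≤ exp(∫_s^t β(τ) dτ) − 1. -/

import Mathlib

open MeasureTheory intervalIntegral Filter Topology

/-- The `k`-fold time-ordered iterated Bochner integral
`∫_s^t R(t₁) (∫_s^{t₁} R(t₂) ( ⋯ (∫_s^{t_{k−1}} R(t_k) dt_k) ⋯ ) dt₂) dt₁`. -/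
noncomputable def timeOrderedIntegral {A : Type*} [NormedRing A] [NormedSpace ℝ A]
    (f : ℝ → A) (s : ℝ) : ℕ → ℝ → A
  | 0, _ => 1
  | k + 1, t => ∫ τ in s..t, f τ * timeOrderedIntegral f s k τ

/-- The Dyson series
`Q(t,s) = 1 + Σ_{k≥1} i^k ∫_s^t R(t₁) ∫_s^{t₁} R(t₂) ⋯ ∫_s^{t_{k−1}} R(t_k) dt_k ⋯ dt₁`. -/
noncomputable def dyson {A : Type*} [NormedRing A] [NormedAlgebra ℂ A]
    (R : ℝ → A) (s t : ℝ) : A :=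
  1 + ∑' k : ℕ, (Complex.I ^ (k + 1)) • timeOrderedIntegral R s (k + 1) t

lemma triangle_swap {s t : ℝ} (f g : ℝ → ℝ)
    (hf : IntegrableOn f (Set.Ioc s t)) (hg : IntegrableOn g (Set.Ioc s t)) :
    (∫ τ in Set.Ioc s t, f τ * ∫ σ in Set.Ioc s τ, g σ)
      = ∫ σ in Set.Ioc s t, g σ * ∫ τ in Set.Ioc σ t, f τ := by
  set μ := (volume : Measure ℝ).restrict (Set.Ioc s t) with hμ
  set F : ℝ × ℝ → ℝ :=
    fun p => Set.indicator {p : ℝ × ℝ | p.2 ≤ p.1} (fun p => f p.1 * g p.2) p with hF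
  have hset : MeasurableSet {p : ℝ × ℝ | p.2 ≤ p.1} :=
    measurableSet_le measurable_snd measurable_fst
  have hFint : Integrable F (μ.prod μ) := (hf.mul_prod hg).indicator hset
  have swap : (∫ τ, ∫ σ, F (τ, σ) ∂μ ∂μ) = ∫ σ, ∫ τ, F (τ, σ) ∂μ ∂μ :=
    integral_integral_swap hFint
  have hL : (∫ τ, ∫ σ, F (τ, σ) ∂μ ∂μ)
      = ∫ τ in Set.Ioc s t, f τ * ∫ σ in Set.Ioc s τ, g σ := by
    refine setIntegral_congr_fun measurableSet_Ioc fun τ hτ => ?_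
    have h1 : (fun σ => F (τ, σ)) = Set.indicator (Set.Iic τ) (fun σ => f τ * g σ) := by
      funext σ
      simp [hF, Set.indicator_apply, Set.mem_Iic]
    rw [h1, MeasureTheory.integral_indicator measurableSet_Iic, hμ,
      Measure.restrict_restrict measurableSet_Iic]
    have h2 : Set.Iic τ ∩ Set.Ioc s t = Set.Ioc s τ := by
      ext σ
      simp only [Set.mem_inter_iff, Set.mem_Iic, Set.mem_Ioc]
      exact ⟨fun ⟨h1', h2', _⟩ => ⟨h2', h1'⟩, fun ⟨h1', h2'⟩ => ⟨h2', h1', h2'.trans hτ.2⟩⟩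
    rw [h2, MeasureTheory.integral_const_mul]
  have hR : (∫ σ, ∫ τ, F (τ, σ) ∂μ ∂μ)
      = ∫ σ in Set.Ioc s t, g σ * ∫ τ in Set.Ioc σ t, f τ := by
    refine setIntegral_congr_fun measurableSet_Ioc fun σ hσ => ?_
    have h1 : (fun τ => F (τ, σ)) = Set.indicator (Set.Ici σ) (fun τ => f τ * g σ) := by
      funext τ
      simp [hF, Set.indicator_apply, Set.mem_Ici]
    rw [h1, MeasureTheory.integral_indicator measurableSet_Ici, hμ,
      Measure.restrict_restrict measurableSet_Ici]
    have h2 : Set.Ici σ ∩ Set.Ioc s t = Set.Icc σ t := by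
      ext τ
      simp only [Set.mem_inter_iff, Set.mem_Ici, Set.mem_Ioc, Set.mem_Icc]
      exact ⟨fun ⟨h1', _, h3'⟩ => ⟨h1', h3'⟩, fun ⟨h1', h2'⟩ => ⟨h1', hσ.1.trans_le h1', h2'⟩⟩
    rw [h2, integral_Icc_eq_integral_Ioc, MeasureTheory.integral_mul_const, mul_comm]
  rw [← hL, swap, hR]

lemma dyson_pow_integrableOn {s t : ℝ} (β : ℝ → ℝ) (hβ : Integrable β (volume : Measure ℝ))
    (n : ℕ) :
    IntegrableOn (fun σ => β σ * (∫ x in s..σ, β x) ^ n) (Set.Ioc s t) volume := by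
  set B : ℝ → ℝ := fun τ => ∫ x in s..τ, β x with hBdef
  have hBcont : Continuous B := hβ.continuous_primitive s
  obtain ⟨C, hC⟩ := (isCompact_Icc (a := s) (b := t)).exists_bound_of_continuousOn
    ((hBcont.pow n).continuousOn)
  have hbd : ∀ᵐ σ ∂(volume.restrict (Set.Ioc s t)), ‖B σ ^ n‖ ≤ C := by
    filter_upwards [ae_restrict_mem measurableSet_Ioc] with σ hσ
    exact hC σ ⟨hσ.1.le, hσ.2⟩
  have := Integrable.bdd_mul (c := C) (hβ.integrableOn)
    ((hBcont.pow n).aestronglyMeasurable) hbd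
  exact this.congr (ae_of_all _ fun x => mul_comm _ _)

lemma dyson_key (β : ℝ → ℝ) (hβ : Integrable β (volume : Measure ℝ)) (s : ℝ) :
    ∀ (n : ℕ) (t : ℝ), s ≤ t →
      ((n : ℝ) + 1) * ∫ τ in s..t, β τ * (∫ σ in s..τ, β σ) ^ n
        = (∫ τ in s..t, β τ) ^ (n + 1) := by
  intro n
  induction n with
  | zero => intro t hst; simp
  | succ n ih =>
    intro t hst
    set B : ℝ → ℝ := fun τ => ∫ x in s..τ, β x with hBdef
    set g : ℝ → ℝ := fun σ => β σ * B σ ^ n with hgdef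
    have hg : IntegrableOn g (Set.Ioc s t) volume := dyson_pow_integrableOn β hβ n
    have hg' : IntegrableOn (fun σ => β σ * B σ ^ (n + 1)) (Set.Ioc s t) volume :=
      dyson_pow_integrableOn β hβ (n + 1)
    set E : ℝ := ∫ τ in Set.Ioc s t, β τ * B τ ^ (n + 1) with hEdef
    set J : ℝ := ∫ σ in Set.Ioc s t, g σ with hJdef
    have hJ : ((n : ℝ) + 1) * J = B t ^ (n + 1) := by
      have := ih t hst
      rwa [integral_of_le hst] at this
    have step2 : E = ((n : ℝ) + 1) * ∫ τ in Set.Ioc s t, β τ * ∫ σ in Set.Ioc s τ, g σ := by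
      rw [hEdef]
      rw [show (∫ τ in Set.Ioc s t, β τ * B τ ^ (n + 1)) = ∫ τ in Set.Ioc s t, ((n : ℝ) + 1) * (β τ * ∫ σ in Set.Ioc s τ, g σ) from setIntegral_congr_fun measurableSet_Ioc fun τ hτ => by
        have hihτ := ih τ hτ.1.le
        rw [integral_of_le hτ.1.le] at hihτ
        rw [← hihτ]; ring]
      rw [MeasureTheory.integral_const_mul]
    have step3 : (∫ τ in Set.Ioc s t, β τ * ∫ σ in Set.Ioc s τ, g σ)
        = ∫ σ in Set.Ioc s t, g σ * ∫ τ in Set.Ioc σ t, β τ :=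
      triangle_swap β g hβ.integrableOn hg
    have step4 : (∫ σ in Set.Ioc s t, g σ * ∫ τ in Set.Ioc σ t, β τ)
        = ∫ σ in Set.Ioc s t, (B t * g σ - β σ * B σ ^ (n + 1)) := by
      refine setIntegral_congr_fun measurableSet_Ioc fun σ hσ => ?_
      have hsub : (∫ τ in Set.Ioc σ t, β τ) = B t - B σ := by
        rw [← integral_of_le hσ.2, hBdef]
        exact (integral_interval_sub_left hβ.intervalIntegrable hβ.intervalIntegrable).symm
      rw [hsub, hgdef]; ring
    have step5 : (∫ σ in Set.Ioc s t, (B t * g σ - β σ * B σ ^ (n + 1)))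
        = B t * J - E := by
      rw [integral_sub (hg.const_mul (B t)) hg', MeasureTheory.integral_const_mul, hJdef, hEdef]
    have hE : E = ((n : ℝ) + 1) * (B t * J - E) := by
      calc E = ((n : ℝ) + 1) * ∫ τ in Set.Ioc s t, β τ * ∫ σ in Set.Ioc s τ, g σ := step2
      _ = ((n : ℝ) + 1) * ∫ σ in Set.Ioc s t, g σ * ∫ τ in Set.Ioc σ t, β τ := by rw [step3]
      _ = ((n : ℝ) + 1) * ∫ σ in Set.Ioc s t, (B t * g σ - β σ * B σ ^ (n + 1)) := by rw [step4]
      _ = ((n : ℝ) + 1) * (B t * J - E) := by rw [step5]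
    have goal' : ((n : ℝ) + 1 + 1) * E = B t ^ (n + 2) := by
      linear_combination hE + B t * hJ
    have hBt : (∫ τ in s..t, β τ) = B t := rfl
    have hEq : (∫ τ in s..t, β τ * (∫ σ in s..τ, β σ) ^ (n + 1)) = E := by
      rw [hEdef, ← integral_of_le hst]
    rw [hEq, hBt]
    push_cast
    exact goal'

lemma dyson_TO_bound {A : Type*} [NormedRing A] [NormedSpace ℝ A]
    (R : ℝ → A) (β : ℝ → ℝ)
    (hβ : Integrable β (volume : Measure ℝ))
    (hRβ : ∀ᵐ τ ∂(volume : Measure ℝ), ‖R τ‖ ≤ β τ) (s : ℝ) :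
    ∀ (k : ℕ) (t : ℝ), s ≤ t →
      ‖timeOrderedIntegral R s (k + 1) t‖
        ≤ (∫ τ in s..t, β τ) ^ (k + 1) / (Nat.factorial (k + 1) : ℝ) := by
  have hβ0 : ∀ᵐ τ ∂(volume : Measure ℝ), 0 ≤ β τ :=
    hRβ.mono fun τ h => (norm_nonneg _).trans h
  have hBnonneg : ∀ {a b : ℝ}, a ≤ b → 0 ≤ ∫ τ in a..b, β τ := fun {a b} hab =>
    intervalIntegral.integral_nonneg_of_ae hab hβ0
  intro k
  induction k with
  | zero =>
    intro t hst
    have h1 : timeOrderedIntegral R s 1 t = ∫ τ in s..t, R τ := by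
      show (∫ τ in s..t, R τ * timeOrderedIntegral R s 0 τ) = _
      simp [timeOrderedIntegral]
    rw [h1]
    have := intervalIntegral.norm_integral_le_abs_of_norm_le (μ := volume) (a := s) (b := t)
      (f := R) (ae_restrict_of_ae hRβ) hβ.intervalIntegrable
    simpa [abs_of_nonneg (hBnonneg hst), Nat.factorial] using this
  | succ k ih =>
    intro t hst
    set B : ℝ → ℝ := fun τ => ∫ x in s..τ, β x with hBdef
    have h1 : timeOrderedIntegral R s (k + 2) t
        = ∫ τ in s..t, R τ * timeOrderedIntegral R s (k + 1) τ := rfl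
    rw [h1]
    set g : ℝ → ℝ := fun τ => β τ * (B τ ^ (k + 1) / (Nat.factorial (k + 1) : ℝ)) with hgdef
    have hgi : IntervalIntegrable g volume s t := by
      rw [intervalIntegrable_iff_integrableOn_Ioc_of_le hst]
      have := (dyson_pow_integrableOn (s := s) (t := t) β hβ (k + 1)).mul_const ((Nat.factorial (k + 1) : ℝ))⁻¹
      exact IntegrableOn.congr_fun this (fun τ _ => by simp only [hgdef]; ring) measurableSet_Ioc
    have hae : ∀ᵐ τ ∂(volume.restrict (Set.uIoc s t)),
        ‖R τ * timeOrderedIntegral R s (k + 1) τ‖ ≤ g τ := by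
      rw [Set.uIoc_of_le hst]
      filter_upwards [ae_restrict_of_ae hRβ, ae_restrict_mem measurableSet_Ioc]
        with τ h1' h2'
      have hβτ : 0 ≤ β τ := (norm_nonneg _).trans h1'
      calc ‖R τ * timeOrderedIntegral R s (k + 1) τ‖
          ≤ ‖R τ‖ * ‖timeOrderedIntegral R s (k + 1) τ‖ := norm_mul_le _ _
        _ ≤ β τ * (B τ ^ (k + 1) / (Nat.factorial (k + 1) : ℝ)) :=
            mul_le_mul h1' (ih τ h2'.1.le) (norm_nonneg _) hβτ
    have hle := intervalIntegral.norm_integral_le_abs_of_norm_le hae hgi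
    have hval : (∫ τ in s..t, g τ) = B t ^ (k + 2) / (Nat.factorial (k + 2) : ℝ) := by
      have hkey := dyson_key β hβ s (k + 1) t hst
      have hgint : (∫ τ in s..t, g τ)
          = (∫ τ in s..t, β τ * B τ ^ (k + 1)) * ((Nat.factorial (k + 1) : ℝ))⁻¹ := by
        rw [← intervalIntegral.integral_mul_const]
        refine intervalIntegral.integral_congr fun τ _ => by rw [hgdef]; ring
      rw [hgint]
      have hfac : (Nat.factorial (k + 2) : ℝ) = ((k : ℝ) + 2) * (Nat.factorial (k + 1) : ℝ) := by
        rw [show k + 2 = (k + 1) + 1 from rfl, Nat.factorial_succ]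
        push_cast; ring
      have hne1 : ((Nat.factorial (k + 1) : ℝ)) ≠ 0 := Nat.cast_ne_zero.2 (Nat.factorial_ne_zero _)
      have hne2 : ((k : ℝ) + 2) ≠ 0 := by positivity
      push_cast at hkey
      field_simp [hfac]
      linear_combination (Nat.factorial (k + 1) : ℝ) * hkey + (∫ τ in s..t, β τ * B τ ^ (k + 1)) * hfac
    calc ‖∫ τ in s..t, R τ * timeOrderedIntegral R s (k + 1) τ‖
        ≤ |∫ τ in s..t, g τ| := hle
      _ = B t ^ (k + 2) / (Nat.factorial (k + 2) : ℝ) := by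
          rw [hval, abs_of_nonneg (div_nonneg (pow_nonneg (hBnonneg hst) _) (by positivity))]
      _ = (∫ τ in s..t, β τ) ^ (k + 2) / (Nat.factorial (k + 2) : ℝ) := rfl

theorem dyson_sub_one_norm_le
    {A : Type*} [NormedRing A] [NormedAlgebra ℂ A] [CompleteSpace A]
    (R : ℝ → A) (β : ℝ → ℝ)
    (hR : AEStronglyMeasurable R (volume : Measure ℝ))
    (hβ : Integrable β (volume : Measure ℝ))
    (hRβ : ∀ᵐ τ ∂(volume : Measure ℝ), ‖R τ‖ ≤ β τ)
    (s t : ℝ) (hst : s ≤ t) :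
    ‖dyson R s t - 1‖ ≤ Real.exp (∫ τ in s..t, β τ) - 1 := by
  set b : ℝ := ∫ τ in s..t, β τ with hb
  set a : ℕ → A := fun k => (Complex.I ^ (k + 1)) • timeOrderedIntegral R s (k + 1) t with ha
  have hnorm : ∀ k, ‖a k‖ ≤ b ^ (k + 1) / (Nat.factorial (k + 1) : ℝ) := by
    intro k
    have h1 : ‖a k‖ = ‖timeOrderedIntegral R s (k + 1) t‖ := by
      rw [ha]
      simp [norm_smul]
    rw [h1]
    exact dyson_TO_bound R β hβ hRβ s k t hst
  have hs2 : Summable fun k : ℕ => b ^ (k + 1) / (Nat.factorial (k + 1) : ℝ) :=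
    (Real.summable_pow_div_factorial b).comp_injective Nat.succ_injective
  have hsum : Summable fun k => ‖a k‖ :=
    Summable.of_nonneg_of_le (fun k => norm_nonneg _) hnorm hs2
  have h1 : dyson R s t - 1 = ∑' k, a k := by
    rw [dyson]; exact add_sub_cancel_left 1 _
  have hexp : (∑' k : ℕ, b ^ (k + 1) / (Nat.factorial (k + 1) : ℝ)) = Real.exp b - 1 := by
    have he : Real.exp b = ∑' n : ℕ, b ^ n / (Nat.factorial n : ℝ) := by
      rw [Real.exp_eq_exp_ℝ, NormedSpace.exp_eq_tsum_div]
    rw [he, (Real.summable_pow_div_factorial b).tsum_eq_zero_add]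
    simp
  rw [h1, ← hexp]
  exact (norm_tsum_le_tsum_norm hsum).trans (hsum.tsum_le_tsum hnorm hs2)
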